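/- Let V be a commutative ring and m ⊆ V an ideal satisfying m·m = m. Then the following are equivalent: (a) for every integer k > 1, m is generated as an ideal by the k-th powers of its elements; (b) for every prime number p, the V-module m/p·m is generated by the images of the p-th powers x^p of elements x ∈ m. -/

import Mathlib

open Pointwise

section Aux

open Finset

private lemma multinomial_univ_of_support {k : ℕ} (S : Finset (Fin k)) (f : Fin k → ℕ)
    (hf : ∀ i, f i ≠ 0 → i ∈ S) : Nat.multinomial S f = Nat.multinomial Finset.univ f := by
  unfold Nat.multinomial
  rw [Finset.sum_subset (subset_univ S) (fun i _ hi => by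
        by_contra h; exact hi (hf i h)),
      Finset.prod_subset (subset_univ S) (fun i _ hi => by
        have : f i = 0 := by by_contra h; exact hi (hf i h)
        simp [this])]

private lemma polarization {R : Type*} [CommRing R] (k : ℕ) (x : Fin k → R) :
    ∑ S : Finset (Fin k), (-1 : R) ^ (k - S.card) * (∑ i ∈ S, x i) ^ k
      = (k.factorial : R) * ∏ i, x i := by
  classical
  have h1 : ∀ S : Finset (Fin k),
      (∑ i ∈ S, x i) ^ k
        = ∑ f ∈ piAntidiag S k, (Nat.multinomial Finset.univ f : R) * ∏ i, x i ^ f i := by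
    intro S
    rw [Finset.sum_pow_eq_sum_piAntidiag]
    refine Finset.sum_congr rfl fun f hf => ?_
    rw [mem_piAntidiag] at hf
    rw [multinomial_univ_of_support S f hf.2,
      Finset.prod_subset (subset_univ S) (fun i _ hi => by
        have : f i = 0 := by by_contra h; exact hi (hf.2 i h)
        simp [this])]
  calc ∑ S : Finset (Fin k), (-1 : R) ^ (k - S.card) * (∑ i ∈ S, x i) ^ k
      = ∑ S : Finset (Fin k), ∑ f ∈ piAntidiag S k,
          (-1 : R) ^ (k - S.card) * ((Nat.multinomial Finset.univ f : R) * ∏ i, x i ^ f i) := by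
        simp_rw [h1, Finset.mul_sum]
    _ = ∑ f ∈ piAntidiag Finset.univ k, ∑ S ∈ Finset.univ.filter (fun S : Finset (Fin k) => ∀ i, f i ≠ 0 → i ∈ S),
          (-1 : R) ^ (k - S.card) * ((Nat.multinomial Finset.univ f : R) * ∏ i, x i ^ f i) := by
        refine Finset.sum_comm' ?_
        intro S f
        simp only [Finset.mem_univ, true_and, mem_piAntidiag, Finset.mem_filter,
          implies_true, and_true]
        constructor
        · rintro ⟨hsum, hsupp⟩
          have h3 : S.sum f = Finset.univ.sum f := Finset.sum_subset (subset_univ S)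
            (fun i _ hi => by by_contra h; exact hi (hsupp i h))
          exact ⟨hsupp, h3.symm.trans hsum⟩
        · rintro ⟨hsupp, hsum⟩
          have h3 : S.sum f = Finset.univ.sum f := Finset.sum_subset (subset_univ S)
            (fun i _ hi => by by_contra h; exact hi (hsupp i h))
          exact ⟨h3.trans hsum, hsupp⟩
    _ = ∑ f ∈ piAntidiag Finset.univ k,
          (if ∀ i, f i ≠ 0 then (1 : R) else 0) *
            ((Nat.multinomial Finset.univ f : R) * ∏ i, x i ^ f i) := by
        refine Finset.sum_congr rfl fun f hf => ?_
        rw [← Finset.sum_mul]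
        congr 1
        -- sign sum
        set T : Finset (Fin k) := Finset.univ.filter (fun i => f i ≠ 0) with hT
        have hTmem : ∀ i, f i ≠ 0 ↔ i ∈ T := by intro i; simp [hT]
        have hfilter : Finset.univ.filter (fun S : Finset (Fin k) => ∀ i, f i ≠ 0 → i ∈ S)
            = Finset.univ.filter (fun S => T ⊆ S) := by
          apply Finset.filter_congr
          intro S _
          constructor
          · intro h i hi; exact h i ((hTmem i).mpr hi)
          · intro h i hi; exact h ((hTmem i).mp hi)
        rw [hfilter]
        have hbij : ∑ S ∈ Finset.univ.filter (fun S => T ⊆ S), (-1 : R) ^ (k - S.card)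
            = ∑ U ∈ Tᶜ.powerset, (-1 : R) ^ (k - (U ∪ T).card) := by
          refine Finset.sum_nbij' (fun S => S \ T) (fun U => U ∪ T) ?_ ?_ ?_ ?_ ?_
          · intro S hS
            simp only [Finset.mem_filter] at hS
            simp only [Finset.mem_powerset]
            intro i hi
            simp only [Finset.mem_sdiff] at hi
            simp [Finset.mem_compl, hi.2]
          · intro U hU
            simp only [Finset.mem_powerset] at hU
            simp only [Finset.mem_filter, Finset.mem_univ, true_and]
            exact Finset.subset_union_right
          · intro S hS
            simp only [Finset.mem_filter] at hS
            exact Finset.sdiff_union_of_subset hS.2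
          · intro U hU
            simp only [Finset.mem_powerset] at hU
            refine Finset.union_sdiff_cancel_right ?_
            exact Finset.disjoint_left.mpr fun a ha => by
              have := hU ha; simp only [Finset.mem_compl] at this; exact this
          · intro S hS
            simp only [Finset.mem_filter] at hS
            rw [Finset.sdiff_union_of_subset hS.2]
        rw [hbij]
        have hcard : ∀ U ∈ Tᶜ.powerset, (U ∪ T).card = U.card + T.card := by
          intro U hU
          simp only [Finset.mem_powerset] at hU
          rw [Finset.card_union_of_disjoint]
          exact Finset.disjoint_left.mpr fun a ha => by
            have := hU ha; simp only [Finset.mem_compl] at this; exact this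
        have hTc : T.card ≤ k := by
          simpa using Finset.card_le_card (Finset.subset_univ T)
        have hcompl : Tᶜ.card = k - T.card := by
          rw [Finset.card_compl]; simp
        calc ∑ U ∈ Tᶜ.powerset, (-1 : R) ^ (k - (U ∪ T).card)
            = ∑ U ∈ Tᶜ.powerset, (-1 : R) ^ (Tᶜ.card - U.card) := by
              refine Finset.sum_congr rfl fun U hU => ?_
              rw [hcard U hU, hcompl]
              congr 1
              have hUc : U.card ≤ k - T.card := by
                rw [← hcompl]
                exact Finset.card_le_card (Finset.mem_powerset.mp hU)
              omega
          _ = ∑ U ∈ Tᶜ.powerset, (-1 : R) ^ Tᶜ.card * (-1 : R) ^ U.card := by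
              refine Finset.sum_congr rfl fun U hU => ?_
              have hUc : U.card ≤ Tᶜ.card := Finset.card_le_card (Finset.mem_powerset.mp hU)
              have : Tᶜ.card - U.card + 2 * U.card = Tᶜ.card + U.card := by omega
              have h2 : ((-1 : R) ^ (Tᶜ.card - U.card)) * ((-1) ^ (2 * U.card))
                  = (-1) ^ Tᶜ.card * (-1) ^ U.card := by
                rw [← pow_add, this, pow_add]
              simpa [pow_mul] using h2
          _ = (-1 : R) ^ Tᶜ.card * ∑ U ∈ Tᶜ.powerset, (-1 : R) ^ U.card := by
              rw [Finset.mul_sum]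
          _ = if ∀ i, f i ≠ 0 then (1 : R) else 0 := by
              have hz := Finset.sum_powerset_neg_one_pow_card (x := Tᶜ)
              have hzr : ∑ U ∈ Tᶜ.powerset, (-1 : R) ^ U.card
                  = if Tᶜ = ∅ then (1 : R) else 0 := by
                have h2 := congrArg (fun z : ℤ => (z : R)) hz
                push_cast [apply_ite (fun z : ℤ => (z : R))] at h2
                simpa using h2
              rw [hzr]
              by_cases h : ∀ i, f i ≠ 0
              · have hTuniv : T = Finset.univ := by
                  ext i; simp [hT, h i]
                rw [if_pos h]
                simp [hTuniv]
              · have hTne : Tᶜ ≠ ∅ := by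
                  intro hc
                  apply h
                  intro i
                  have : i ∈ T := by
                    by_contra hi
                    have : i ∈ Tᶜ := Finset.mem_compl.mpr hi
                    simp [hc] at this
                  exact (hTmem i).mpr this
                rw [if_neg hTne, if_neg h, mul_zero]
    _ = (k.factorial : R) * ∏ i, x i := by
        simp_rw [ite_mul, one_mul, zero_mul]
        rw [← Finset.sum_filter]
        have hsingle : (piAntidiag (Finset.univ : Finset (Fin k)) k).filter (fun f => ∀ i, f i ≠ 0)
            = {fun _ => 1} := by
          ext g
          simp only [Finset.mem_filter, mem_piAntidiag, Finset.mem_singleton]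
          constructor
          · rintro ⟨⟨hsum, -⟩, hpos⟩
            funext i
            have hall : ∀ j ∈ (Finset.univ : Finset (Fin k)), 1 ≤ g j :=
              fun j _ => Nat.one_le_iff_ne_zero.mpr (hpos j)
            have hsum1 : ∑ j : Fin k, (1 : ℕ) = ∑ j : Fin k, g j := by
              simp [hsum]
            have := (Finset.sum_eq_sum_iff_of_le hall).mp hsum1
            exact ((this i (Finset.mem_univ i)).symm)
          · rintro rfl
            exact ⟨⟨by simp, fun i _ => Finset.mem_univ i⟩, fun i => one_ne_zero⟩
        rw [hsingle, Finset.sum_singleton]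
        congr 1
        · unfold Nat.multinomial
          simp
        · simp

section Helpers

open Pointwise

variable {V : Type*} [CommRing V]

private lemma span_pow_le (m : Ideal V) (k : ℕ) (hk : 0 < k) :
    Ideal.span ((fun x => x ^ k) '' (m : Set V)) ≤ m := by
  rw [Ideal.span_le]
  rintro _ ⟨x, hx, rfl⟩
  exact Ideal.pow_mem_of_mem m hx k hk

private lemma pow_self (m : Ideal V) (hm : m * m = m) : ∀ k, 0 < k → m ^ k = m := by
  intro k hk
  induction k with
  | zero => omega
  | succ n ih =>
    rcases Nat.eq_zero_or_pos n with h0 | hpos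
    · subst h0; simp
    · rw [pow_succ, ih hpos, hm]

private lemma factorial_mul_mem (m : Ideal V) (hm : m * m = m) (k : ℕ) (hk : 0 < k)
    {a : V} (ha : a ∈ m) :
    (k.factorial : V) * a ∈ Ideal.span ((fun x => x ^ k) '' (m : Set V)) := by
  classical
  have ha' : a ∈ Submodule.span V ((m : Set V) ^ k) := by
    rw [← Submodule.pow_eq_span_pow_set, pow_self m hm k hk]; exact ha
  refine Submodule.span_induction
    (p := fun b _ => (k.factorial : V) * b ∈ Ideal.span ((fun x => x ^ k) '' (m : Set V)))
    ?_ ?_ ?_ ?_ ha'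
  · intro b hb
    show (k.factorial : V) * b ∈ _
    rw [Set.mem_pow] at hb
    obtain ⟨f, hf⟩ := hb
    have hprod : b = ∏ i, (f i : V) := by rw [← hf, List.prod_ofFn]
    rw [hprod, ← polarization k (fun i => (f i : V))]
    refine Ideal.sum_mem _ fun S _ => ?_
    refine Ideal.mul_mem_left _ _ (Ideal.subset_span ?_)
    exact ⟨∑ i ∈ S, (f i : V), Submodule.sum_mem m fun i _ => (f i).2, rfl⟩
  · show (k.factorial : V) * 0 ∈ _
    simp
  · intro x y _ _ ihx ihy
    show (k.factorial : V) * (x + y) ∈ _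
    rw [mul_add]
    exact add_mem ihx ihy
  · intro r x _ ih
    show (k.factorial : V) * (r • x) ∈ _
    rw [smul_eq_mul, mul_left_comm]
    exact Ideal.mul_mem_left _ _ ih

private lemma pow_p_mem_span {q : ℕ} (hq : q.Prime) (s : Set V) {x : V}
    (hx : x ∈ Ideal.span s) :
    x ^ q ∈ Ideal.span ((fun z => z ^ q) '' s) ⊔ Ideal.span {(q : V)} * Ideal.span s := by
  refine Submodule.span_induction
    (p := fun y _ => y ^ q ∈ Ideal.span ((fun z => z ^ q) '' s)
      ⊔ Ideal.span {(q : V)} * Ideal.span s) ?_ ?_ ?_ ?_ hx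
  · intro z hz
    exact Submodule.mem_sup_left (Ideal.subset_span ⟨z, hz, rfl⟩)
  · show (0 : V) ^ q ∈ _
    rw [zero_pow hq.ne_zero]
    exact zero_mem _
  · intro x y hxs hys ihx ihy
    show (x + y) ^ q ∈ _
    rw [add_pow_prime_eq hq]
    refine add_mem (add_mem ihx ihy) (Submodule.mem_sup_right ?_)
    exact Ideal.mul_mem_right _ _ (Ideal.mul_mem_right _ _
      (Ideal.mul_mem_mul (Ideal.subset_span rfl) hxs))
  · intro r x _ ih
    show (r • x) ^ q ∈ _
    rw [smul_eq_mul, mul_pow]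
    exact Ideal.mul_mem_left _ _ ih

private lemma le_span_ppow (m : Ideal V) {q : ℕ} (hq : q.Prime)
    (hb : m ≤ Ideal.span ((fun x => x ^ q) '' (m : Set V)) ⊔ Ideal.span {(q : V)} * m) :
    ∀ s : ℕ, 0 < s → m ≤ Ideal.span ((fun x => x ^ q ^ s) '' (m : Set V))
      ⊔ Ideal.span {(q : V)} * m := by
  intro s hs
  induction s with
  | zero => omega
  | succ n ih =>
    rcases Nat.eq_zero_or_pos n with h0 | hpos
    · subst h0; simpa [pow_one] using hb
    · have IH := ih hpos
      have hIq : Ideal.span ((fun x => x ^ q) '' (m : Set V))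
          ≤ Ideal.span ((fun x => x ^ q ^ (n + 1)) '' (m : Set V))
            ⊔ Ideal.span {(q : V)} * m := by
        rw [Ideal.span_le]
        rintro _ ⟨y, hy, rfl⟩
        beta_reduce
        obtain ⟨w, hw, c, hc, hwc⟩ := Submodule.mem_sup.mp (IH hy)
        have hker : y ^ q - w ^ q ∈ Ideal.span {(q : V)} * m := by
          have hmk : Ideal.Quotient.mk (Ideal.span {(q : V)} * m) (y ^ q)
              = Ideal.Quotient.mk (Ideal.span {(q : V)} * m) (w ^ q) := by
            rw [← hwc, map_pow, map_pow, map_add,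
              Ideal.Quotient.eq_zero_iff_mem.mpr hc, add_zero]
          exact Ideal.Quotient.eq.mp hmk
        have hw' : w ^ q ∈ Ideal.span ((fun x => x ^ q ^ (n + 1)) '' (m : Set V))
            ⊔ Ideal.span {(q : V)} * m := by
          have h1 := pow_p_mem_span hq ((fun x => x ^ q ^ n) '' (m : Set V)) hw
          have himg : (fun z => z ^ q) '' ((fun x => x ^ q ^ n) '' (m : Set V))
              = (fun x => x ^ q ^ (n + 1)) '' (m : Set V) := by
            rw [Set.image_image]
            apply Set.image_congr
            intro a _
            rw [← pow_mul, ← pow_succ]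
          rw [himg] at h1
          have h2 : Ideal.span {(q : V)} * Ideal.span ((fun x => x ^ q ^ n) '' (m : Set V))
              ≤ Ideal.span {(q : V)} * m :=
            Ideal.mul_mono_right (span_pow_le m _ (pow_pos hq.pos n))
          exact sup_le_sup_left h2 _ h1
        have hy2 : y ^ q = w ^ q + (y ^ q - w ^ q) := by ring
        rw [hy2]
        exact add_mem hw' (Submodule.mem_sup_right hker)
      exact le_trans hb (sup_le hIq le_sup_right)

private lemma le_span_k_sup (m : Ideal V) (k : ℕ) (hk : 0 < k) {q : ℕ} (hq : q.Prime)
    (hb : m ≤ Ideal.span ((fun x => x ^ q) '' (m : Set V)) ⊔ Ideal.span {(q : V)} * m) :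
    m ≤ Ideal.span ((fun x => x ^ k) '' (m : Set V)) ⊔ Ideal.span {(q : V)} * m := by
  have h := le_span_ppow m hq hb k hk
  have hle : Ideal.span ((fun x => x ^ q ^ k) '' (m : Set V))
      ≤ Ideal.span ((fun x => x ^ k) '' (m : Set V)) := by
    rw [Ideal.span_le]
    rintro _ ⟨z, hz, rfl⟩
    beta_reduce
    have hkk : k ≤ q ^ k :=
      le_of_lt (lt_of_lt_of_le (Nat.lt_two_pow_self (n := k)) (Nat.pow_le_pow_left hq.two_le k))
    have hsplit : z ^ q ^ k = z ^ k * z ^ (q ^ k - k) := by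
      rw [← pow_add]; congr 1; omega
    rw [hsplit]
    exact Ideal.mul_mem_right _ _ (Ideal.subset_span ⟨z, hz, rfl⟩)
  exact le_trans h (sup_le_sup_right hle _)

private lemma le_span_k_sup_pow (m : Ideal V) (J P : Ideal V) (h : m ≤ J ⊔ P * m) :
    ∀ e : ℕ, m ≤ J ⊔ P ^ e * m := by
  intro e
  induction e with
  | zero => simpa using le_sup_right
  | succ n IH =>
    calc m ≤ J ⊔ P ^ n * m := IH
      _ ≤ J ⊔ P ^ n * (J ⊔ P * m) := sup_le_sup_left (Ideal.mul_mono_right h) J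
      _ = J ⊔ (P ^ n * J ⊔ P ^ (n + 1) * m) := by
          rw [Submodule.mul_sup, ← mul_assoc, ← pow_succ]
      _ ≤ J ⊔ P ^ (n + 1) * m := by
          refine sup_le le_sup_left (sup_le ?_ le_sup_right)
          exact le_trans (Ideal.mul_le.2 fun _ _ _ hs => J.mul_mem_left _ hs) le_sup_left

private lemma subtype_span (m : Ideal V) {q : ℕ} (hq : 0 < q)
    {b : m} (hb : b ∈ Submodule.span V (Set.range fun x : m =>
      (⟨(x : V) ^ q, Ideal.pow_mem_of_mem m x.2 q hq⟩ : m))) :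
    (b : V) ∈ Ideal.span ((fun x => x ^ q) '' (m : Set V)) := by
  have h1 := Submodule.mem_map_of_mem (f := m.subtype) hb
  rw [Submodule.map_span] at h1
  refine Submodule.span_mono ?_ h1
  rintro _ ⟨_, ⟨x, rfl⟩, rfl⟩
  exact ⟨(x : V), x.2, rfl⟩

private lemma span_subtype (m : Ideal V) {q : ℕ} (hq : 0 < q) {a : V}
    (ha : a ∈ Ideal.span ((fun x => x ^ q) '' (m : Set V))) (ham : a ∈ m) :
    (⟨a, ham⟩ : m) ∈ Submodule.span V (Set.range fun x : m =>
      (⟨(x : V) ^ q, Ideal.pow_mem_of_mem m x.2 q hq⟩ : m)) := by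
  have hle : Ideal.span ((fun x => x ^ q) '' (m : Set V)) ≤ m := span_pow_le m q hq
  refine Submodule.span_induction
    (p := fun z hz => (⟨z, hle hz⟩ : m) ∈ Submodule.span V (Set.range fun x : m =>
      (⟨(x : V) ^ q, Ideal.pow_mem_of_mem m x.2 q hq⟩ : m))) ?_ ?_ ?_ ?_ ha
  · rintro z ⟨x, hxm, rfl⟩
    exact Submodule.subset_span ⟨⟨x, hxm⟩, rfl⟩
  · exact zero_mem _
  · intro x y hx hy ihx ihy
    exact add_mem ihx ihy
  · intro r x hx ih
    exact Submodule.smul_mem _ r ih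

end Helpers


end Aux

/-- Let `V` be a commutative ring and `m ⊆ V` an ideal with `m·m = m`.
The following are equivalent:
(a) for every integer `k > 1`, `m` is generated as an ideal by the `k`-th powers of its
elements;
(b) for every prime number `p`, the `V`-module `m/p·m` is generated by the images of the
`p`-th powers `x^p` of elements `x ∈ m`. -/
theorem span_pow_eq_self_iff_quotient_generated_by_prime_powers
    {V : Type*} [CommRing V] (m : Ideal V) (hm : m * m = m) :
    (∀ k : ℕ, 1 < k → Ideal.span ((fun x => x ^ k) '' (m : Set V)) = m) ↔
      (∀ p : ℕ, (hp : p.Prime) →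
        Submodule.span V
          (Set.range fun x : m =>
            Submodule.Quotient.mk (p := (p : V) • (⊤ : Submodule V m))
              (⟨(x : V) ^ p, Ideal.pow_mem_of_mem m x.2 p hp.pos⟩ : m)) = ⊤) := by
  constructor
  · intro ha p hp
    rw [eq_top_iff]
    rintro x -
    obtain ⟨a, rfl⟩ := Submodule.Quotient.mk_surjective _ x
    have h1 : (a : V) ∈ Ideal.span ((fun x => x ^ p) '' (m : Set V)) := by
      rw [ha p hp.one_lt]; exact a.2
    have h2 := span_subtype m hp.pos h1 a.2
    have h2' : a ∈ Submodule.span V (Set.range fun x : m =>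
        (⟨(x : V) ^ p, Ideal.pow_mem_of_mem m x.2 p hp.pos⟩ : m)) := by
      simpa using h2
    have h3 := Submodule.mem_map_of_mem
      (f := ((p : V) • (⊤ : Submodule V m)).mkQ) h2'
    rw [Submodule.map_span] at h3
    refine Submodule.span_mono ?_ h3
    rintro _ ⟨_, ⟨x, rfl⟩, rfl⟩
    exact ⟨x, rfl⟩
  · intro hb k hk
    refine le_antisymm (span_pow_le m k (by omega)) ?_
    -- first translate hypothesis (b) into ideal form
    have hbp : ∀ q : ℕ, q.Prime → m ≤ Ideal.span ((fun x => x ^ q) '' (m : Set V))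
        ⊔ Ideal.span {(q : V)} * m := by
      intro q hq z hz
      have htop := hb q hq
      have hmem : Submodule.Quotient.mk (p := (q : V) • (⊤ : Submodule V m)) (⟨z, hz⟩ : m)
          ∈ Submodule.span V (Set.range fun x : m =>
            Submodule.Quotient.mk (p := (q : V) • (⊤ : Submodule V m))
              (⟨(x : V) ^ q, Ideal.pow_mem_of_mem m x.2 q hq.pos⟩ : m)) := by
        rw [htop]; trivial
      have hrange : (Set.range fun x : m =>
            Submodule.Quotient.mk (p := (q : V) • (⊤ : Submodule V m))
              (⟨(x : V) ^ q, Ideal.pow_mem_of_mem m x.2 q hq.pos⟩ : m))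
            = ((q : V) • (⊤ : Submodule V m)).mkQ '' (Set.range fun x : m =>
              (⟨(x : V) ^ q, Ideal.pow_mem_of_mem m x.2 q hq.pos⟩ : m)) := by
        ext t
        simp only [Set.mem_range, Set.mem_image, Submodule.mkQ_apply]
        constructor
        · rintro ⟨x, rfl⟩; exact ⟨_, ⟨x, rfl⟩, rfl⟩
        · rintro ⟨_, ⟨x, rfl⟩, rfl⟩; exact ⟨x, rfl⟩
      rw [hrange, ← Submodule.map_span] at hmem
      obtain ⟨b, hbspan, hbeq⟩ := Submodule.mem_map.mp hmem
      have hsub : (⟨z, hz⟩ : m) - b ∈ (q : V) • (⊤ : Submodule V m) := by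
        rw [← Submodule.Quotient.eq]
        exact hbeq.symm
      obtain ⟨t, -, ht⟩ := Submodule.mem_map.mp hsub
      have hval : z - (b : V) = (q : V) * (t : V) := by
        have := congrArg (Subtype.val) ht
        simpa using this.symm
      have hz2 : z - (b : V) ∈ Ideal.span {(q : V)} * m := by
        rw [hval]
        exact Ideal.mul_mem_mul (Ideal.subset_span rfl) t.2
      have hb2 : (b : V) ∈ Ideal.span ((fun x => x ^ q) '' (m : Set V)) :=
        subtype_span m hq.pos hbspan
      have hzdecomp : z = (b : V) + (z - (b : V)) := by ring
      rw [hzdecomp]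
      exact Submodule.add_mem_sup hb2 hz2
    -- now the main argument
    intro a ha
    set Ik := Ideal.span ((fun x => x ^ k) '' (m : Set V)) with hIk
    set N := k.factorial with hNdef
    have hN0 : N ≠ 0 := Nat.factorial_ne_zero k
    have hN1 : N ≠ 1 := by
      have := Nat.self_le_factorial k
      omega
    have hQN : ∀ d ∈ m, (N : V) * d ∈ Ik := fun d hd =>
      factorial_mul_mem m hm k (by omega) hd
    have hQp : ∀ q ∈ N.primeFactors, ((ordCompl[q] N : ℕ) : V) * a ∈ Ik := by
      intro q hqmem
      have hqp : q.Prime := Nat.prime_of_mem_primeFactors hqmem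
      have h1 : m ≤ Ik ⊔ Ideal.span {(q : V)} * m :=
        le_span_k_sup m k (by omega) hqp (hbp q hqp)
      have h2 : m ≤ Ik ⊔ Ideal.span {(q : V)} ^ (N.factorization q) * m :=
        le_span_k_sup_pow m Ik _ h1 _
      obtain ⟨y, hy, c, hc, hyc⟩ := Submodule.mem_sup.mp (h2 ha)
      rw [Ideal.span_singleton_pow] at hc
      obtain ⟨d, hd, hdc⟩ := Ideal.mem_span_singleton_mul.mp hc
      have key : ((ordCompl[q] N : ℕ) : V) * ((q : V) ^ (N.factorization q)) = (N : V) := by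
        have h3 : ordCompl[q] N * q ^ N.factorization q = N := by
          rw [mul_comm]
          exact Nat.ordProj_mul_ordCompl_eq_self N q
        calc ((ordCompl[q] N : ℕ) : V) * ((q : V) ^ (N.factorization q))
            = ((ordCompl[q] N * q ^ N.factorization q : ℕ) : V) := by push_cast; ring
          _ = (N : V) := by rw [h3]
      have hsplit : ((ordCompl[q] N : ℕ) : V) * a
          = ((ordCompl[q] N : ℕ) : V) * y + (N : V) * d := by
        rw [← hyc, ← hdc, ← key]; ring
      rw [hsplit]
      exact add_mem (Ideal.mul_mem_left _ _ hy) (hQN d hd)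
    -- gcd closure
    have hgcd2 : ∀ x y : ℕ, (x : V) * a ∈ Ik → (y : V) * a ∈ Ik →
        ((Nat.gcd x y : ℕ) : V) * a ∈ Ik := by
      intro x y hx hy
      have hbz := Nat.gcd_eq_gcd_ab x y
      have hb2 : ((Nat.gcd x y : ℕ) : V)
          = (x : V) * ((Nat.gcdA x y : ℤ) : V) + (y : V) * ((Nat.gcdB x y : ℤ) : V) := by
        have hc := congrArg (fun z : ℤ => (z : V)) hbz
        push_cast at hc
        exact hc
      rw [hb2, add_mul]
      refine add_mem ?_ ?_
      · have hrw : (x : V) * ((Nat.gcdA x y : ℤ) : V) * a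
            = ((Nat.gcdA x y : ℤ) : V) * ((x : V) * a) := by ring
        rw [hrw]
        exact Ideal.mul_mem_left _ _ hx
      · have hrw : (y : V) * ((Nat.gcdB x y : ℤ) : V) * a
            = ((Nat.gcdB x y : ℤ) : V) * ((y : V) * a) := by ring
        rw [hrw]
        exact Ideal.mul_mem_left _ _ hy
    have keygcd : ∀ s : Finset ℕ, (∀ q ∈ s, ((ordCompl[q] N : ℕ) : V) * a ∈ Ik) →
        ((s.gcd fun q => ordCompl[q] N : ℕ) : V) * a ∈ Ik := by
      intro s
      induction s using Finset.induction_on with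
      | empty =>
        intro _
        simp only [Finset.gcd_empty, Nat.cast_zero, zero_mul]
        exact zero_mem _
      | insert _ _ hnot ih =>
        intro hall
        rw [Finset.gcd_insert]
        exact hgcd2 _ _ (hall _ (Finset.mem_insert_self _ _))
          (ih fun q hq => hall q (Finset.mem_insert_of_mem hq))
    have hg1 : (N.primeFactors.gcd fun q => ordCompl[q] N) = 1 := by
      by_contra hg
      have hql : (N.primeFactors.gcd fun q => ordCompl[q] N).minFac.Prime :=
        Nat.minFac_prime hg
      obtain ⟨p0, hp0⟩ : ∃ p0, p0 ∈ N.primeFactors := by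
        obtain ⟨p0, hp0, hdvd⟩ := Nat.exists_prime_and_dvd hN1
        exact ⟨p0, Nat.mem_primeFactors.mpr ⟨hp0, hdvd, hN0⟩⟩
      set g := N.primeFactors.gcd fun q => ordCompl[q] N with hgdef
      set q := g.minFac with hqdef
      have hqg : q ∣ g := Nat.minFac_dvd g
      have hgp0 : g ∣ ordCompl[p0] N := Finset.gcd_dvd hp0
      have hqN : q ∣ N := (hqg.trans hgp0).trans (Nat.ordCompl_dvd N p0)
      have hqmem : q ∈ N.primeFactors := Nat.mem_primeFactors.mpr ⟨hql, hqN, hN0⟩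
      have hfin : q ∣ ordCompl[q] N := hqg.trans (Finset.gcd_dvd hqmem)
      exact (Nat.not_dvd_ordCompl hql hN0) hfin
    have hfinal := keygcd N.primeFactors hQp
    rw [hg1] at hfinal
    simpa using hfinal
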